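/- For every nonnegative integer $j$, the number of tuples $(x_1,x_2,x_3,\bar x_3,\bar x_2,\bar x_1)$ of nonnegative integers satisfying $x_3\equiv\bar x_3\pmod 2$ and $x_1+x_2+(x_3+\bar x_3)/2+\bar x_2+\bar x_1 = j$ equals $\binom{j+5}{5}+\binom{j+4}{5}$. -/
import Mathlib

/-- Compositions of `n` into 6 parts are equivalent to multisets of size `n` over `Fin 6`. -/
private noncomputable def compEquivSym (n : ℕ) :
    {v : Fin 6 → ℕ // ∑ i, v i = n} ≃ Sym (Fin 6) n where
  toFun v := ⟨Finsupp.toMultiset (Finsupp.equivFunOnFinite.symm v.1), by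
    rw [Finsupp.card_toMultiset, Finsupp.sum_fintype _ _ (fun _ => rfl)]
    simpa using v.2⟩
  invFun s := ⟨fun i => s.1.count i, by
    have h2 := congrArg Multiset.card (Multiset.toFinsupp_toMultiset s.1)
    rw [Finsupp.card_toMultiset, Finsupp.sum_fintype _ _ (fun _ => rfl)] at h2
    simp [Multiset.toFinsupp_apply, s.2] at h2
    simpa [Multiset.toFinsupp_apply] using h2⟩
  left_inv v := by
    apply Subtype.ext
    funext i
    simp [Finsupp.count_toMultiset]
  right_inv s := by
    apply Subtype.ext
    have h1 : (Finsupp.equivFunOnFinite.symm (fun i => s.1.count i)) = s.1.toFinsupp := by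
      ext i; simp [Multiset.toFinsupp_apply]
    simp only [h1, Multiset.toFinsupp_toMultiset]

private lemma cardS (n : ℕ) :
    Nat.card {v : Fin 6 → ℕ // ∑ i, v i = n} = (n + 5).choose 5 := by
  rw [Nat.card_congr (compEquivSym n), Nat.card_eq_fintype_card,
    Sym.card_sym_eq_choose]
  have h6 : Fintype.card (Fin 6) = 6 := by simp
  rw [h6]
  have h : 6 + n - 1 = n + 5 := by omega
  rw [h]
  have := Nat.choose_symm (n := n + 5) (k := 5) (by omega)
  simp only [Nat.add_sub_cancel] at this
  exact this

private instance instFin1 (n : ℕ) : Finite {v : Fin 6 → ℕ // ∑ i, v i = n} :=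
  Finite.of_equiv _ (compEquivSym n).symm

private instance instFin2 (j : ℕ) : Finite {v : Fin 6 → ℕ // ∑ i, v i + 1 = j} := by
  apply Finite.of_injective
    (fun v => (fun i => (⟨v.1 i, by
      have := Finset.single_le_sum (f := v.1) (fun _ _ => Nat.zero_le _) (Finset.mem_univ i)
      omega⟩ : Fin (j + 1))) : _ → Fin 6 → Fin (j + 1))
  intro a b h
  apply Subtype.ext
  funext i
  exact congrArg Fin.val (congrFun h i)

private def mainEquiv (j : ℕ) :
    {b : ℕ × ℕ × ℕ × ℕ × ℕ × ℕ //
        b.2.2.1 % 2 = b.2.2.2.1 % 2 ∧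
        b.1 + b.2.1 + (b.2.2.1 + b.2.2.2.1) / 2 + b.2.2.2.2.1 + b.2.2.2.2.2 = j}
      ≃ {v : Fin 6 → ℕ // ∑ i, v i = j} ⊕ {v : Fin 6 → ℕ // ∑ i, v i + 1 = j} where
  toFun b :=
    if h : b.1.2.2.1 % 2 = 0 then
      Sum.inl ⟨![b.1.1, b.1.2.1, b.1.2.2.1 / 2, b.1.2.2.2.1 / 2, b.1.2.2.2.2.1,
          b.1.2.2.2.2.2], by
        have hp := b.2.1
        have hs := b.2.2
        rw [Fin.sum_univ_six]
        show b.1.1 + b.1.2.1 + b.1.2.2.1 / 2 + b.1.2.2.2.1 / 2 + b.1.2.2.2.2.1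
          + b.1.2.2.2.2.2 = j
        omega⟩
    else
      Sum.inr ⟨![b.1.1, b.1.2.1, b.1.2.2.1 / 2, b.1.2.2.2.1 / 2, b.1.2.2.2.2.1,
          b.1.2.2.2.2.2], by
        have hp := b.2.1
        have hs := b.2.2
        rw [Fin.sum_univ_six]
        show b.1.1 + b.1.2.1 + b.1.2.2.1 / 2 + b.1.2.2.2.1 / 2 + b.1.2.2.2.2.1
          + b.1.2.2.2.2.2 + 1 = j
        omega⟩
  invFun :=
    Sum.elim
      (fun w => ⟨(w.1 0, w.1 1, 2 * w.1 2, 2 * w.1 3, w.1 4, w.1 5), by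
        have h := w.2
        rw [Fin.sum_univ_six] at h
        refine ⟨?_, ?_⟩
        · show (2 * w.1 2) % 2 = (2 * w.1 3) % 2
          omega
        · show w.1 0 + w.1 1 + (2 * w.1 2 + 2 * w.1 3) / 2 + w.1 4 + w.1 5 = j
          omega⟩)
      (fun w => ⟨(w.1 0, w.1 1, 2 * w.1 2 + 1, 2 * w.1 3 + 1, w.1 4, w.1 5), by
        have h := w.2
        rw [Fin.sum_univ_six] at h
        refine ⟨?_, ?_⟩
        · show (2 * w.1 2 + 1) % 2 = (2 * w.1 3 + 1) % 2
          omega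
        · show w.1 0 + w.1 1 + (2 * w.1 2 + 1 + (2 * w.1 3 + 1)) / 2 + w.1 4 + w.1 5 = j
          omega⟩)
  left_inv := by
    rintro ⟨⟨x1, x2, x3, y3, y2, y1⟩, hp, hs⟩
    dsimp only
    by_cases h : x3 % 2 = 0
    · rw [dif_pos h]
      apply Subtype.ext
      show (x1, x2, 2 * (x3 / 2), 2 * (y3 / 2), y2, y1) = (x1, x2, x3, y3, y2, y1)
      have hp' : x3 % 2 = y3 % 2 := hp
      have h3 : 2 * (x3 / 2) = x3 := by omega
      have h4 : 2 * (y3 / 2) = y3 := by omega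
      rw [h3, h4]
    · rw [dif_neg h]
      apply Subtype.ext
      show (x1, x2, 2 * (x3 / 2) + 1, 2 * (y3 / 2) + 1, y2, y1) = (x1, x2, x3, y3, y2, y1)
      have hp' : x3 % 2 = y3 % 2 := hp
      have h3 : 2 * (x3 / 2) + 1 = x3 := by omega
      have h4 : 2 * (y3 / 2) + 1 = y3 := by omega
      rw [h3, h4]
  right_inv := by
    rintro (⟨v, h⟩ | ⟨v, h⟩)
    · have hc : (2 * v 2) % 2 = 0 := by omega
      show (if h : (2 * v 2) % 2 = 0 then _ else _) = _
      rw [dif_pos hc]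
      congr 1
      apply Subtype.ext
      funext i
      fin_cases i
      · rfl
      · rfl
      · show 2 * v 2 / 2 = v 2; omega
      · show 2 * v 3 / 2 = v 3; omega
      · rfl
      · rfl
    · have hc : ¬(2 * v 2 + 1) % 2 = 0 := by omega
      show (if h : (2 * v 2 + 1) % 2 = 0 then _ else _) = _
      rw [dif_neg hc]
      congr 1
      apply Subtype.ext
      funext i
      fin_cases i
      · rfl
      · rfl
      · show (2 * v 2 + 1) / 2 = v 2; omega
      · show (2 * v 3 + 1) / 2 = v 3; omega
      · rfl
      · rfl

/-- The number of elements of the `G₂` crystal `B^{G₂}(jΛ̄₁)` in its coordinate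
parametrization: tuples `(x₁,x₂,x₃,x̄₃,x̄₂,x̄₁)` of nonnegative integers with
`x₃ ≡ x̄₃ (mod 2)` and `x₁+x₂+(x₃+x̄₃)/2+x̄₂+x̄₁ = j`. -/
theorem card_BG2 (j : ℕ) :
    Nat.card {b : ℕ × ℕ × ℕ × ℕ × ℕ × ℕ //
        b.2.2.1 % 2 = b.2.2.2.1 % 2 ∧
        b.1 + b.2.1 + (b.2.2.1 + b.2.2.2.1) / 2 + b.2.2.2.2.1 + b.2.2.2.2.2 = j}
      = Nat.choose (j + 5) 5 + Nat.choose (j + 4) 5 := by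
  rw [Nat.card_congr (mainEquiv j), Nat.card_sum, cardS]
  congr 1
  cases j with
  | zero =>
    have : IsEmpty {v : Fin 6 → ℕ // ∑ i, v i + 1 = 0} := ⟨fun v => by omega⟩
    rw [Nat.card_of_isEmpty]
    exact (Nat.choose_eq_zero_of_lt (by norm_num)).symm
  | succ n =>
    have e : {v : Fin 6 → ℕ // ∑ i, v i + 1 = n + 1} ≃ {v : Fin 6 → ℕ // ∑ i, v i = n} :=
      Equiv.subtypeEquivRight (fun v => by omega)
    rw [Nat.card_congr e, cardS]
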